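/- arXiv:2310.15732 — 6 statements merged into one kernel-verified Lean document; each statement's English description precedes it below -/
import Mathlib

section
/- Assume p ≥ 1 and that B is p-adically separated, i.e. the only element b ∈ B with p^n ∣ b for every natural number n is b = 0. If x ∈ M admits a p^n-th root in M for every n ≥ 1 (that is, for each n there exists y ∈ M with y^(p^n) = x), then δ(x) = 0. -/
/-- Assume `p ≥ 1` and that `B` is `p`-adically separated. If `x ∈ M` admits a
`p^n`-th root in `M` for every `n ≥ 1`, then `δ(x) = 0`, where `δ : M → B`
satisfies the multiplicativity axiom of the `δ_log`-structure of a log-prism. -/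
theorem stmt_2 {M B : Type*} [CommMonoid M] [CommRing B] (p : ℕ) (hp : 1 ≤ p) (δ : M → B)
    (hδ : ∀ x y : M, δ (x * y) = δ x + δ y + (p : B) * δ x * δ y)
    (hsep : ∀ b : B, (∀ n : ℕ, (p : B) ^ n ∣ b) → b = 0)
    (x : M) (hx : ∀ n : ℕ, 1 ≤ n → ∃ y : M, y ^ (p ^ n) = x) :
    δ x = 0 := by
  have key : ∀ k : ℕ, 1 ≤ k → ∀ z : M,
      ∃ c : B, δ (z ^ k) = δ z * ((k : B) + (p : B) * δ z * c) := by
    intro k hk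
    induction k, hk using Nat.le_induction with
    | base => intro z; exact ⟨0, by simp⟩
    | succ k hk ih =>
      intro z
      obtain ⟨c, hc⟩ := ih z
      refine ⟨c + (k : B) + (p : B) * δ z * c, ?_⟩
      rw [pow_succ, hδ, hc]
      push_cast
      ring
  have pow_lem : ∀ n : ℕ, ∀ w : M, ∃ d : B, δ (w ^ p ^ n) = (p : B) ^ n * d := by
    intro n
    induction n with
    | zero => intro w; exact ⟨δ w, by simp⟩
    | succ n ih =>
      intro w
      obtain ⟨d, hd⟩ := ih w
      obtain ⟨c, hc⟩ := key p hp (w ^ p ^ n)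
      refine ⟨d * (1 + δ (w ^ p ^ n) * c), ?_⟩
      rw [pow_succ, pow_mul, hc, hd]
      ring
  apply hsep
  intro n
  rcases Nat.eq_zero_or_pos n with h0 | h1
  · simp [h0]
  · obtain ⟨y, hy⟩ := hx n h1
    obtain ⟨d, hd⟩ := pow_lem n y
    exact ⟨d, by rw [← hy, hd]⟩
end

section
/- Let G be a torsion-free additive abelian group, let Q be an additive submonoid of G that generates G as a group, and assume Q is saturated in G (for all g ∈ G and n ≥ 1, if n•g ∈ Q then g ∈ Q). Let f : ℚ≥0 → G be an injective additive monoid homomorphism with image contained in Q, and assume f is Kummer, i.e. for every q ∈ Q there exists n ≥ 1 with n•q in the image of f. Then there is an additive group isomorphism F : ℚ ≃ G extending f, and either Q equals the image of f (that is, F(ℚ≥0)) or Q = G. -/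
open scoped NNRat

private lemma coe_toNNRat_sub (x : ℚ) :
    ((x.toNNRat : ℚ) - ((-x).toNNRat : ℚ)) = x := by
  rcases le_total 0 x with h | h
  · rw [Rat.coe_toNNRat _ h, show ((-x).toNNRat : ℚ) = 0 by
      simpa [NNRat.coe_eq_zero] using Rat.toNNRat_eq_zero.2 (neg_nonpos.2 h)]
    ring
  · rw [Rat.coe_toNNRat _ (neg_nonneg.2 h), show ((x).toNNRat : ℚ) = 0 by
      simpa [NNRat.coe_eq_zero] using Rat.toNNRat_eq_zero.2 h]
    ring

private lemma key {G : Type*} [AddCommGroup G] (f : ℚ≥0 →+ G)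
    {s t u v : ℚ≥0} (h : (s : ℚ) - t = (u : ℚ) - v) :
    f s - f t = f u - f v := by
  have h' : s + v = u + t := by
    have : ((s + v : ℚ≥0) : ℚ) = ((u + t : ℚ≥0) : ℚ) := by push_cast; linarith
    exact_mod_cast this
  have := congrArg f h'
  rw [map_add, map_add] at this
  linear_combination (norm := abel_nf) this

/-- Let `G` be a torsion-free abelian group, `Q` a saturated submonoid of `G`
generating `G` as a group, and `f : ℚ≥0 → G` an injective Kummer additive monoid
homomorphism with image contained in `Q`. Then `f` extends to a group isomorphism
`F : ℚ ≃ G`, and either `Q` is the image of `f` or `Q = G`. -/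
theorem stmt_5 {G : Type*} [AddCommGroup G]
    (htf : ∀ (n : ℕ) (g : G), 1 ≤ n → n • g = 0 → g = 0)
    (Q : AddSubmonoid G)
    (hgen : AddSubgroup.closure (Q : Set G) = ⊤)
    (hsat : ∀ (g : G) (n : ℕ), 1 ≤ n → n • g ∈ Q → g ∈ Q)
    (f : ℚ≥0 →+ G) (hinj : Function.Injective f)
    (him : ∀ q : ℚ≥0, f q ∈ Q)
    (hKum : ∀ q ∈ Q, ∃ n : ℕ, 1 ≤ n ∧ n • q ∈ Set.range f) :
    ∃ F : ℚ ≃+ G, (∀ q : ℚ≥0, F (q : ℚ) = f q) ∧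
      ((Q : Set G) = Set.range f ∨ Q = ⊤) := by
  -- the extension as a hom
  set F₀ : ℚ →+ G :=
    { toFun := fun x => f x.toNNRat - f (-x).toNNRat
      map_zero' := by simp
      map_add' := by
        intro a b
        have h1 : f (a + b).toNNRat - f ((a).toNNRat + (b).toNNRat)
            = f (-(a + b)).toNNRat - f ((-a).toNNRat + (-b).toNNRat) := by
          apply key f
          push_cast
          have := coe_toNNRat_sub a
          have := coe_toNNRat_sub b
          have := coe_toNNRat_sub (a + b)
          linarith
        rw [map_add, map_add] at h1
        linear_combination (norm := abel_nf) h1 } with hF₀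
  have hcoe : ∀ q : ℚ≥0, F₀ (q : ℚ) = f q := by
    intro q
    have h1 : ((q : ℚ)).toNNRat = q := NNRat.toNNRat_coe q
    have h2 : (-(q : ℚ)).toNNRat = 0 := by
      rw [Rat.toNNRat_eq_zero]; exact neg_nonpos.2 q.2
    simp [hF₀, h1, h2]
  have hFinj : Function.Injective F₀ := by
    rw [injective_iff_map_eq_zero]
    intro x hx
    have : f x.toNNRat = f (-x).toNNRat := by
      have : f x.toNNRat - f (-x).toNNRat = 0 := hx
      linear_combination (norm := abel_nf) this
    have := hinj this
    have := congrArg (fun q : ℚ≥0 => (q : ℚ)) this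
    have hc := coe_toNNRat_sub x
    linarith
  -- every element of Q is in the range of F₀
  have hQrange : ∀ q ∈ Q, ∃ x : ℚ, F₀ x = q := by
    intro q hq
    obtain ⟨n, hn, r, hr⟩ := hKum q hq
    refine ⟨(r : ℚ) / n, ?_⟩
    have hne : (n : ℚ) ≠ 0 := by positivity
    have : (n : ℤ) • F₀ ((r : ℚ) / n) = F₀ ((r : ℚ)) := by
      rw [← map_zsmul]
      congr 1
      field_simp
      rw [zsmul_eq_mul, Int.cast_natCast]; field_simp
    rw [hcoe r, hr] at this
    have h0 : (n : ℤ) • (F₀ ((r : ℚ) / n) - q) = 0 := by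
      rw [smul_sub, this]
      simp [natCast_zsmul]
    have := htf n _ hn (by
      have : (n : ℤ) • (F₀ ((r : ℚ) / n) - q) = (n : ℕ) • (F₀ ((r : ℚ) / n) - q) := by
        simp [natCast_zsmul]
      rw [this] at h0; exact h0)
    have := sub_eq_zero.mp this
    exact this
  have hFsurj : Function.Surjective F₀ := by
    intro g
    have hg : g ∈ AddSubgroup.closure (Q : Set G) := hgen ▸ AddSubgroup.mem_top g
    have : g ∈ F₀.range := by
      refine AddSubgroup.closure_le (K := F₀.range) |>.mpr ?_ hg
      intro q hq
      obtain ⟨x, hx⟩ := hQrange q hq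
      exact ⟨x, hx⟩
    exact this
  set F : ℚ ≃+ G := AddEquiv.ofBijective F₀ ⟨hFinj, hFsurj⟩ with hF
  refine ⟨F, fun q => hcoe q, ?_⟩
  by_cases hQ : (Q : Set G) = Set.range f
  · exact Or.inl hQ
  · right
    have hsub : Set.range f ⊆ (Q : Set G) := by
      rintro _ ⟨r, rfl⟩; exact him r
    obtain ⟨q₀, hq₀Q, hq₀nr⟩ : ∃ q₀ ∈ Q, q₀ ∉ Set.range f := by
      by_contra h
      push_neg at h
      exact hQ (Set.Subset.antisymm h hsub)
    obtain ⟨x₀, hx₀⟩ := hQrange q₀ hq₀Q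
    have hx₀neg : x₀ < 0 := by
      by_contra h
      push_neg at h
      exact hq₀nr ⟨x₀.toNNRat, by rw [← hx₀, ← hcoe, Rat.coe_toNNRat _ h]⟩
    rw [AddSubmonoid.eq_top_iff']
    intro g
    obtain ⟨y, hy⟩ := hFsurj g
    obtain ⟨m, hm⟩ := Archimedean.arch (-y) (neg_pos.2 hx₀neg)
    have hz : 0 ≤ y - m • x₀ := by
      have : m • x₀ = -(m • (-x₀)) := by simp
      rw [this]; linarith [hm]
    have : g = F₀ (y - m • x₀) + m • q₀ := by
      rw [← hx₀, ← hy, ← map_nsmul, ← map_add]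
      congr 1; ring
    rw [this]
    refine Q.add_mem ?_ (AddSubmonoid.nsmul_mem Q hq₀Q m)
    have : F₀ (y - m • x₀) = f (y - m • x₀).toNNRat := by
      rw [← hcoe, Rat.coe_toNNRat _ hz]
    rw [this]; exact him _
end

section
/- The element x = (1/3 mod ℤ, 0) of (ℚ/ℤ) × ℚ satisfies 3•x ∈ P but x ∉ P. In particular, the monoid P is not saturated in (ℚ/ℤ) × ℚ. -/
/-- The subgroup `ℤ` of `ℚ`. -/
def ZinQ : AddSubgroup ℚ := AddSubgroup.zmultiples (1 : ℚ)

/-- The quotient group `ℚ/ℤ`. -/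
abbrev QmodZ : Type := ℚ ⧸ ZinQ

/-- The quotient map `ℚ → ℚ/ℤ`, `a ↦ a mod ℤ`. -/
def qmodZmk : ℚ →+ QmodZ := QuotientAddGroup.mk' ZinQ

/-- The homomorphism `φ : ℚ × ℚ → (ℚ/ℤ) × ℚ`, `(a,b) ↦ (a mod ℤ, a + b)`. -/
def phiQ : ℚ × ℚ →+ QmodZ × ℚ :=
  (qmodZmk.comp (AddMonoidHom.fst ℚ ℚ)).prod
    (AddMonoidHom.fst ℚ ℚ + AddMonoidHom.snd ℚ ℚ)

/-- The submonoid `ℚ≥0 × ℚ≥0` of `ℚ × ℚ`. -/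
def nonnegPairs : AddSubmonoid (ℚ × ℚ) where
  carrier := {ab | 0 ≤ ab.1 ∧ 0 ≤ ab.2}
  zero_mem' := ⟨le_refl 0, le_refl 0⟩
  add_mem' := fun ha hb => ⟨add_nonneg ha.1 hb.1, add_nonneg ha.2 hb.2⟩

/-- The monoid `P = ℚ≥0 ⊕_ℕ ℚ≥0`, presented as the image of `ℚ≥0 × ℚ≥0`
inside the group completion `(ℚ/ℤ) × ℚ`. -/
def Pmon : AddSubmonoid (QmodZ × ℚ) := nonnegPairs.map phiQ

lemma third_not_mem : (1/3 : ℚ) ∉ ZinQ := by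
  intro h
  rw [ZinQ, AddSubgroup.mem_zmultiples_iff] at h
  obtain ⟨k, hk⟩ := h
  simp only [zsmul_eq_mul, mul_one] at hk
  have : ((3 : ℤ) : ℚ) * k = 1 := by rw [hk]; norm_num
  have h3 : (3 : ℤ) * k = 1 := by exact_mod_cast this
  omega

lemma smul3_mem : (3 : ℕ) • ((qmodZmk (1/3), 0) : QmodZ × ℚ) ∈ Pmon := by
  have h0 : (3 : ℕ) • ((qmodZmk (1/3), 0) : QmodZ × ℚ) = (qmodZmk 1, 0) := by
    rw [Prod.ext_iff]
    refine ⟨?_, by simp⟩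
    show (3 : ℕ) • (qmodZmk (1/3)) = qmodZmk 1
    rw [← map_nsmul]
    congr 1
    norm_num
  have h1 : qmodZmk (1 : ℚ) = qmodZmk 0 := by
    rw [qmodZmk, QuotientAddGroup.mk'_eq_mk']
    exact ⟨-1, by rw [ZinQ]; exact ⟨⟨-1, by simp⟩, by norm_num⟩⟩
  rw [h0, h1]
  exact ⟨(0, 0), ⟨le_refl 0, le_refl 0⟩, by simp [phiQ]⟩

lemma x_not_mem : ((qmodZmk (1/3), 0) : QmodZ × ℚ) ∉ Pmon := by
  rintro ⟨⟨a, b⟩, ⟨ha, hb⟩, heq⟩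
  have h1 : qmodZmk a = qmodZmk (1/3) := congrArg Prod.fst heq
  have h2 : a + b = 0 := congrArg Prod.snd heq
  have haz : a = 0 := le_antisymm (by linarith) ha
  subst haz
  rw [qmodZmk, QuotientAddGroup.mk'_eq_mk'] at h1
  obtain ⟨z, hz, hz'⟩ := h1
  have : z = 1/3 := by linarith [hz']
  exact third_not_mem (this ▸ hz)

/-- The element `x = (1/3 mod ℤ, 0)` of `(ℚ/ℤ) × ℚ` satisfies `3•x ∈ P` but
`x ∉ P`; in particular `P` is not saturated in `(ℚ/ℤ) × ℚ`. -/
theorem stmt_7 :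
    (3 : ℕ) • ((qmodZmk (1/3), 0) : QmodZ × ℚ) ∈ Pmon ∧
      ((qmodZmk (1/3), 0) : QmodZ × ℚ) ∉ Pmon ∧
      ¬ (∀ (g : QmodZ × ℚ) (n : ℕ), 1 ≤ n → n • g ∈ Pmon → g ∈ Pmon) := by
  refine ⟨smul3_mem, x_not_mem, fun h => x_not_mem (h _ 3 (by norm_num) smul3_mem)⟩
end

section
/- The saturation of P inside (ℚ/ℤ) × ℚ, namely the set {x ∈ (ℚ/ℤ) × ℚ : there exists an integer m ≥ 1 with m•x ∈ P}, is equal to (ℚ/ℤ) × {q ∈ ℚ : 0 ≤ q}. -/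
/-- The saturation of `P = ℚ≥0 ⊕_ℕ ℚ≥0` inside `(ℚ/ℤ) × ℚ` equals
`(ℚ/ℤ) × ℚ≥0`. -/
theorem stmt_8 :
    {x : QmodZ × ℚ | ∃ m : ℕ, 1 ≤ m ∧ m • x ∈ Pmon} =
      {x : QmodZ × ℚ | 0 ≤ x.2} := by

  ext x
  simp only [Set.mem_setOf_eq]
  constructor
  · rintro ⟨m, hm, ⟨a, b⟩, ⟨ha, hb⟩, heq⟩
    have h2 : a + b = m • x.2 := congrArg Prod.snd heq
    have : (0:ℚ) ≤ (m:ℚ) * x.2 := by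
      rw [← nsmul_eq_mul, ← h2]; exact add_nonneg ha hb
    have hmpos : (0:ℚ) < m := by exact_mod_cast hm
    exact nonneg_of_mul_nonneg_right this hmpos
  · intro hx
    obtain ⟨q, hq⟩ := QuotientAddGroup.mk'_surjective ZinQ x.1
    refine ⟨q.den, q.pos, ⟨0, q.den • x.2⟩, ⟨le_refl 0, by positivity⟩, ?_⟩
    have hz : (q.den : ℚ) * q ∈ ZinQ := by
      refine ⟨q.num, ?_⟩
      have := Rat.mul_den_eq_num q
      simp only [zsmul_eq_mul, mul_one]
      rw [mul_comm]; exact this.symm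
    have h1 : q.den • x.1 = 0 := by
      rw [← hq]
      show q.den • (QuotientAddGroup.mk' ZinQ) q = 0
      rw [← map_nsmul, QuotientAddGroup.mk'_apply, QuotientAddGroup.eq_zero_iff]
      simpa [nsmul_eq_mul] using hz
    have h2 : phiQ (0, q.den • x.2) = ((0 : QmodZ), q.den • x.2) := by
      simp [phiQ, qmodZmk]
    rw [h2, Prod.smul_def, h1]
end

section
/- Let n ≥ 1 and let ψ : ℚ^n → (ℚ/ℤ)^(n−1) × ℚ be the additive group homomorphism sending (a_0, …, a_{n−1}) to ((a_0 mod ℤ, …, a_{n−2} mod ℤ), a_0 + ⋯ + a_{n−1}). Then ψ is surjective and its kernel is {(k_0, …, k_{n−1}) ∈ ℤ^n : k_0 + ⋯ + k_{n−1} = 0}. Consequently the n-fold amalgamated sum ℚ ⊕_ℤ ⋯ ⊕_ℤ ℚ (the quotient of ℚ^n by the subgroup of integer vectors with coordinate sum zero) is isomorphic to (ℚ/ℤ)^(n−1) × ℚ. -/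
/-- The summation homomorphism `ℚ^n → ℚ`. -/
def sumHom (n : ℕ) : (Fin n → ℚ) →+ ℚ where
  toFun a := ∑ i, a i
  map_zero' := by simp
  map_add' := by intro a b; simp [Finset.sum_add_distrib]

/-- The subgroup of `ℚ^n` consisting of integer vectors with coordinate sum zero. -/
def intSumZero (n : ℕ) : AddSubgroup (Fin n → ℚ) :=
  (AddSubgroup.pi Set.univ fun _ => AddSubgroup.zmultiples (1 : ℚ)) ⊓ (sumHom n).ker
/-- For `n ≥ 1`, the map `ψ : ℚ^n → (ℚ/ℤ)^(n-1) × ℚ`,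
`(a_0, …, a_{n-1}) ↦ ((a_0 mod ℤ, …, a_{n-2} mod ℤ), a_0 + ⋯ + a_{n-1})`, is surjective with
kernel the integer vectors of sum zero; consequently the `n`-fold amalgamated sum
`ℚ ⊕_ℤ ⋯ ⊕_ℤ ℚ` is isomorphic to `(ℚ/ℤ)^(n-1) × ℚ`. -/
theorem stmt_9 (n : ℕ) (hn : 1 ≤ n)
    (ψ : (Fin n → ℚ) →+ (Fin (n - 1) → QmodZ) × ℚ)
    (hψ : ∀ a : Fin n → ℚ,
      ψ a = (fun i : Fin (n - 1) => qmodZmk (a (Fin.castLE (Nat.sub_le n 1) i)), ∑ i, a i)) :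
    Function.Surjective ψ ∧ ψ.ker = intSumZero n ∧
      Nonempty (((Fin n → ℚ) ⧸ intSumZero n) ≃+ (Fin (n - 1) → QmodZ) × ℚ) := by
  obtain ⟨m, rfl⟩ : ∃ m, n = m + 1 := ⟨n - 1, (Nat.succ_pred_eq_of_pos hn).symm⟩
  have hcast : ∀ i : Fin (m + 1 - 1), Fin.castLE (Nat.sub_le (m+1) 1) i = Fin.castSucc i := by
    intro i; rfl
  have hsurj : Function.Surjective ψ := by
    rintro ⟨q, s⟩
    choose r hr using fun i => QuotientAddGroup.mk'_surjective ZinQ (q i)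
    refine ⟨Fin.snoc r (s - ∑ j, r j), ?_⟩
    rw [hψ]
    refine Prod.ext ?_ ?_
    · funext i
      simp only [hcast, Fin.snoc_castSucc]
      exact hr i
    · simp [Fin.sum_univ_castSucc]
  have hmem : ∀ x : ℚ, qmodZmk x = 0 ↔ x ∈ ZinQ := by
    intro x
    exact QuotientAddGroup.eq_zero_iff x
  have hker : ψ.ker = intSumZero (m + 1) := by
    ext a
    simp only [AddMonoidHom.mem_ker, hψ, Prod.mk_eq_zero, funext_iff, Pi.zero_apply,
      intSumZero, AddSubgroup.mem_inf, AddSubgroup.mem_pi, Set.mem_univ, forall_true_left,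
      AddMonoidHom.mem_ker, sumHom, AddMonoidHom.coe_mk, ZeroHom.coe_mk, hcast, hmem]
    constructor
    · rintro ⟨h1, h2⟩
      refine ⟨?_, h2⟩
      intro i
      refine Fin.lastCases ?_ ?_ i
      · have : a (Fin.last m) = -∑ j : Fin m, a j.castSucc := by
          have := h2
          rw [Fin.sum_univ_castSucc] at this
          linarith
        rw [this]
        exact neg_mem (AddSubgroup.sum_mem _ (fun j _ => h1 j))
      · exact h1
    · rintro ⟨h1, h2⟩
      exact ⟨fun i => h1 _, h2⟩
  refine ⟨hsurj, hker, ?_⟩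
  rw [← hker]
  exact ⟨QuotientAddGroup.quotientKerEquivOfSurjective ψ hsurj⟩
end

section
/- Let n ≥ 1 and let P_n ⊆ (ℚ/ℤ)^(n−1) × ℚ be the image under ψ of the submonoid {(a_0, …, a_{n−1}) ∈ ℚ^n : 0 ≤ a_i for all i}. Then the saturation {x ∈ (ℚ/ℤ)^(n−1) × ℚ : there exists an integer m ≥ 1 with m•x ∈ P_n} is equal to (ℚ/ℤ)^(n−1) × {q ∈ ℚ : 0 ≤ q}. -/
/-- The submonoid of `ℚ^n` of vectors with all coordinates nonnegative. -/
def nonnegVecs (n : ℕ) : AddSubmonoid (Fin n → ℚ) where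
  carrier := {a | ∀ i, 0 ≤ a i}
  zero_mem' := fun _ => le_refl 0
  add_mem' := fun ha hb i => add_nonneg (ha i) (hb i)

lemma int_mem_ZinQ (z : ℤ) : (z : ℚ) ∈ ZinQ := by
  rw [ZinQ, AddSubgroup.mem_zmultiples_iff]
  exact ⟨z, by simp⟩

/-- For `n ≥ 1`, the saturation of `P_n = ℚ≥0 ⊕_ℕ ⋯ ⊕_ℕ ℚ≥0` (the image under `ψ` of the
nonnegative vectors) inside `(ℚ/ℤ)^(n-1) × ℚ` equals `(ℚ/ℤ)^(n-1) × ℚ≥0`. -/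
theorem stmt_10 (n : ℕ) (hn : 1 ≤ n)
    (ψ : (Fin n → ℚ) →+ (Fin (n - 1) → QmodZ) × ℚ)
    (hψ : ∀ a : Fin n → ℚ,
      ψ a = (fun i : Fin (n - 1) => qmodZmk (a (Fin.castLE (Nat.sub_le n 1) i)), ∑ i, a i)) :
    {x : (Fin (n - 1) → QmodZ) × ℚ | ∃ m : ℕ, 1 ≤ m ∧ m • x ∈ (nonnegVecs n).map ψ} =
      {x : (Fin (n - 1) → QmodZ) × ℚ | 0 ≤ x.2} := by
  ext x
  simp only [Set.mem_setOf_eq, AddSubmonoid.mem_map]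
  constructor
  · rintro ⟨m, hm, a, ha, hψa⟩
    rw [hψ] at hψa
    have h2 : (∑ i, a i) = (m • x).2 := congrArg Prod.snd hψa
    have hsum : (0 : ℚ) ≤ (m : ℚ) * x.2 := by
      have h3 : (0 : ℚ) ≤ ∑ i, a i := Finset.sum_nonneg fun i _ => ha i
      rw [h2] at h3
      simpa [nsmul_eq_mul] using h3
    have hm' : (0 : ℚ) < m := by exact_mod_cast hm
    exact nonneg_of_mul_nonneg_right hsum hm'
  · intro hx
    choose r hr using fun i => QuotientAddGroup.mk'_surjective ZinQ (x.1 i)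
    set m : ℕ := ∏ i, (r i).den with hmdef
    have hm1 : 1 ≤ m := Finset.one_le_prod' (fun i _ => (r i).pos)
    refine ⟨m, hm1, fun j => if (j : ℕ) = n - 1 then (m : ℚ) * x.2 else 0, ?_, ?_⟩
    · intro j
      dsimp only
      split
      · exact mul_nonneg (Nat.cast_nonneg m) hx
      · exact le_refl 0
    · rw [hψ]
      have hkey : ∀ i : Fin (n - 1), m • x.1 i = 0 := by
        intro i
        obtain ⟨k, hk⟩ := Finset.dvd_prod_of_mem (fun i => (r i).den) (Finset.mem_univ i)
        rw [← hr i]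
        have : (m : ℕ) • r i ∈ ZinQ := by
          have hden : ((r i).den : ℚ) * r i = (r i).num := by
            rw [mul_comm]
            exact_mod_cast Rat.mul_den_eq_num (r i)
          have : (m : ℕ) • r i = ((k * (r i).num : ℤ) : ℚ) := by
            rw [nsmul_eq_mul, hmdef, hk]
            push_cast
            rw [mul_comm ((r i).den : ℚ) (k : ℚ), mul_assoc, hden]
          rw [this]
          exact int_mem_ZinQ _
        have := (QuotientAddGroup.eq_zero_iff ((m : ℕ) • r i)).2 this
        calc m • qmodZmk (r i) = qmodZmk (m • r i) := (map_nsmul qmodZmk m (r i)).symm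
          _ = 0 := this
      refine Prod.ext ?_ ?_
      · funext i
        have hi : ((Fin.castLE (Nat.sub_le n 1) i : Fin n) : ℕ) ≠ n - 1 :=
          Nat.ne_of_lt i.isLt
        show qmodZmk (if _ then _ else _) = (m • x).1 i
        rw [if_neg hi, map_zero]
        exact (hkey i).symm
      · show (∑ j : Fin n, (if (j : ℕ) = n - 1 then (m : ℚ) * x.2 else 0)) = (m • x).2
        have hlt : n - 1 < n := Nat.sub_lt hn one_pos
        have hiff : ∀ j : Fin n, ((j : ℕ) = n - 1) ↔ (j = ⟨n - 1, hlt⟩) := by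
          intro j; rw [Fin.ext_iff]
        simp only [hiff]
        rw [Finset.sum_ite_eq' Finset.univ (⟨n - 1, hlt⟩ : Fin n)]
        simp [nsmul_eq_mul]
end
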